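/- Let p be a prime and let A be a finite permutation group of p-power order with a regular abelian subgroup G of index p. If G has a subgroup M of index p that is normalised but not centralised by a point-stabiliser in A, then A contains a regular nonabelian subgroup. -/

import Mathlib

/-- The automorphism group of a digraph given by an adjacency relation. -/
def dAut {V : Type*} (adj : V → V → Prop) : Subgroup (Equiv.Perm V) where
  carrier := {σ | ∀ u v : V, adj (σ u) (σ v) ↔ adj u v}
  one_mem' := by intro u v; rfl
  mul_mem' := by
    intro a b ha hb u v
    simp only [Set.mem_setOf_eq] at *
    rw [Equiv.Perm.mul_apply, Equiv.Perm.mul_apply, ha, hb]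
  inv_mem' := by
    intro a ha u v
    simpa using (ha (a⁻¹ u) (a⁻¹ v)).symm

/-- Adjacency of the Cayley digraph `Cay(G,S)`. -/
def cayAdj (G : Type*) [Group G] (S : Set G) : G → G → Prop :=
  fun u v => v * u⁻¹ ∈ S

/-- The right regular representation of `G` in `Equiv.Perm G`. -/
def rightReg (G : Type*) [Group G] : G →* Equiv.Perm G where
  toFun g := Equiv.mulRight g⁻¹
  map_one' := by ext x; simp
  map_mul' := by intro a b; ext x; simp [mul_assoc]

/-- The right regular representation of `G` as a subgroup of `Aut(Cay(G,S))`. -/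
def cayleyRR (G : Type*) [Group G] (S : Set G) :
    Subgroup (dAut (cayAdj G S)) :=
  ((rightReg G).range).subgroupOf (dAut (cayAdj G S))

/-- A subgroup of `Equiv.Perm V` is regular if it is sharply transitive on `V`. -/
def IsRegularSub {V : Type*} (H : Subgroup (Equiv.Perm V)) : Prop :=
  ∀ v w : V, ∃! h : H, (h : Equiv.Perm V) v = w

/-- Adjacency of the cartesian product of two digraphs. -/
def cartAdj {α β : Type*} (adjG : α → α → Prop) (adjD : β → β → Prop) :
    α × β → α × β → Prop :=
  fun u v => (u.1 = v.1 ∧ adjD u.2 v.2) ∨ (u.2 = v.2 ∧ adjG u.1 v.1)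

/-- `pathLe adj i u v` : there is a directed path of length at most `i` from `u` to `v`. -/
def pathLe {V : Type*} (adj : V → V → Prop) : ℕ → V → V → Prop
  | 0, u, v => u = v
  | (n+1), u, v => pathLe adj n u v ∨ ∃ w, pathLe adj n u w ∧ adj w v

private lemma aux_order {K : Type*} [Group K] {p : ℕ} (hp : p.Prime)
    (N : Subgroup K) [N.Normal] (hidx : N.index = p)
    {q : K ⧸ N} (hq : q ≠ 1) : orderOf q = p ∧ Subgroup.zpowers q = ⊤ := by
  have hcard : Nat.card (K ⧸ N) = p := by rw [← Subgroup.index_eq_card]; exact hidx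
  haveI hfin : Finite (K ⧸ N) :=
    Nat.finite_of_card_ne_zero (by rw [hcard]; exact hp.ne_zero)
  have h1 : orderOf q ∣ p := hcard ▸ orderOf_dvd_natCard q
  have h2 : orderOf q = p := by
    rcases (Nat.Prime.eq_one_or_self_of_dvd hp _ h1) with h | h
    · exact absurd (orderOf_eq_one_iff.mp h) hq
    · exact h
  refine ⟨h2, Subgroup.eq_top_of_card_eq _ ?_⟩
  rw [Nat.card_zpowers, h2, hcard]

private lemma aux_fixed {K : Type*} [Group K] {p : ℕ} (hp : p.Prime)
    (N : Subgroup K) [hN : N.Normal] (hidx : N.index = p)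
    (f : K →* K) (hfN : ∀ x ∈ N, f x ∈ N) (hfp : ∀ x : K, f^[p] x = x) :
    ∀ x : K, x⁻¹ * f x ∈ N := by
  haveI : Fact p.Prime := ⟨hp⟩
  have hker : N ≤ ((QuotientGroup.mk' N).comp f).ker := by
    intro x hx
    simp only [MonoidHom.mem_ker, MonoidHom.comp_apply, QuotientGroup.mk'_apply]
    exact (QuotientGroup.eq_one_iff _).mpr (hfN x hx)
  set φ : K ⧸ N →* K ⧸ N := QuotientGroup.lift N ((QuotientGroup.mk' N).comp f) hker with hφdef
  have hφ : ∀ x : K, φ ((x : K ⧸ N)) = ((f x : K) : K ⧸ N) := fun x => rfl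
  have hiter : ∀ (n : ℕ) (x : K), (⇑φ)^[n] ((x : K ⧸ N)) = ((f^[n] x : K) : K ⧸ N) := by
    intro n
    induction n with
    | zero => intro x; rfl
    | succ n ih =>
      intro x
      rw [Function.iterate_succ_apply, Function.iterate_succ_apply, hφ, ih]
  have key : ∀ q : K ⧸ N, φ q = q := by
    intro q
    by_cases hq : q = 1
    · rw [hq, map_one]
    · obtain ⟨h2, htop⟩ := aux_order hp N hidx hq
      have hmem : φ q ∈ Subgroup.zpowers q := htop ▸ Subgroup.mem_top (φ q)
      obtain ⟨k, hk⟩ := Subgroup.mem_zpowers_iff.mp hmem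
      have hit : ∀ n : ℕ, (⇑φ)^[n] q = q ^ (k ^ n) := by
        intro n
        induction n with
        | zero => simp
        | succ n ih =>
          rw [Function.iterate_succ_apply', ih, map_zpow, ← hk, ← zpow_mul, pow_succ']
      have hp1 : q ^ (k ^ p) = q ^ (1 : ℤ) := by
        have h0 : (⇑φ)^[p] q = q := by
          obtain ⟨x, rfl⟩ := QuotientGroup.mk_surjective q
          rw [hiter, hfp]
        rw [hit p] at h0
        simpa using h0
      have hmod : k ^ p ≡ 1 [ZMOD (p : ℕ)] := by
        have := zpow_eq_zpow_iff_modEq.mp hp1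
        rwa [h2] at this
      have hk1 : (k : ZMod p) = 1 := by
        have h3 : ((k ^ p : ℤ) : ZMod p) = ((1 : ℤ) : ZMod p) :=
          (ZMod.intCast_eq_intCast_iff _ _ _).mpr hmod
        push_cast at h3
        rwa [ZMod.pow_card] at h3
      have hmod1 : k ≡ 1 [ZMOD (p : ℕ)] := by
        apply (ZMod.intCast_eq_intCast_iff k 1 p).mp
        push_cast
        exact hk1
      rw [← hk]
      calc q ^ k = q ^ (1 : ℤ) := zpow_eq_zpow_iff_modEq.mpr (by rw [h2]; exact hmod1)
        _ = q := zpow_one q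
  intro x
  have h4 := key ((x : K ⧸ N))
  rw [hφ] at h4
  have h5 : (f x)⁻¹ * x ∈ N := QuotientGroup.eq.mp h4
  have h6 := N.inv_mem h5
  simpa using h6

private lemma aux_gen {K : Type*} [Group K] {p : ℕ} (hp : p.Prime)
    (N : Subgroup K) [N.Normal] (hidx : N.index = p) {g : K} (hg : g ∉ N) :
    (∀ x : K, ∃ k : ℕ, (g ^ k)⁻¹ * x ∈ N) ∧ (∀ k : ℕ, g ^ k ∈ N → p ∣ k) ∧ g ^ p ∈ N := by
  haveI hfin : Finite (K ⧸ N) := Nat.finite_of_card_ne_zero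
    (by rw [← Subgroup.index_eq_card, hidx]; exact hp.ne_zero)
  have hq : ((g : K ⧸ N)) ≠ 1 := by rwa [Ne, QuotientGroup.eq_one_iff]
  obtain ⟨h2, htop⟩ := aux_order hp N hidx hq
  refine ⟨?_, ?_, ?_⟩
  · intro x
    have hmem : ((x : K ⧸ N)) ∈ Subgroup.zpowers ((g : K ⧸ N)) := htop ▸ Subgroup.mem_top _
    rw [← mem_powers_iff_mem_zpowers] at hmem
    obtain ⟨k, hk⟩ := (Submonoid.mem_powers_iff _ _).mp hmem
    refine ⟨k, QuotientGroup.eq.mp ?_⟩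
    rw [QuotientGroup.mk_pow]
    exact hk.symm ▸ hk
  · intro k hk
    have h3 : ((g : K ⧸ N)) ^ k = 1 := by
      rw [← QuotientGroup.mk_pow]
      exact (QuotientGroup.eq_one_iff _).mpr hk
    have h4 := orderOf_dvd_of_pow_eq_one h3
    rwa [h2] at h4
  · have h3 : ((g : K ⧸ N)) ^ p = 1 := by rw [← h2]; exact pow_orderOf_eq_one _
    rw [← QuotientGroup.mk_pow] at h3
    exact (QuotientGroup.eq_one_iff _).mp h3

private lemma aux_normal {p : ℕ} (hp : p.Prime) {K : Type*} [Group K] [Finite K]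
    (hK : IsPGroup p K) (H : Subgroup K) (hidx : H.index = p) : H.Normal := by
  haveI : Fact p.Prime := ⟨hp⟩
  haveI : H.FiniteIndex := ⟨by rw [hidx]; exact hp.ne_zero⟩
  suffices hcore : H.normalCore = H by rw [← hcore]; infer_instance
  have hle := H.normalCore_le
  obtain ⟨n, hn⟩ := hK.index H.normalCore
  have hdvd1 : H.index ∣ H.normalCore.index := Subgroup.index_dvd_of_le hle
  have hdvd2 : H.normalCore.index ∣ Nat.factorial p := by
    rw [Subgroup.normalCore_eq_ker, Subgroup.index_ker]
    have h3 : Nat.card (MulAction.toPermHom K (K ⧸ H)).range ∣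
        Nat.card (Equiv.Perm (K ⧸ H)) := Subgroup.card_subgroup_dvd_card _
    have h4 : Nat.card (Equiv.Perm (K ⧸ H)) = Nat.factorial p := by
      classical
      letI := Fintype.ofFinite (K ⧸ H)
      rw [Nat.card_eq_fintype_card, Fintype.card_perm, ← Nat.card_eq_fintype_card,
        ← Subgroup.index_eq_card, hidx]
    rwa [h4] at h3
  have hn1 : H.normalCore.index = p := by
    rw [hidx] at hdvd1
    have hle1 : n ≤ 1 := by
      by_contra hgt
      push_neg at hgt
      have h5 : p ^ 2 ∣ Nat.factorial p := dvd_trans (pow_dvd_pow p hgt) (hn ▸ hdvd2)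
      have hfac : Nat.factorial p = p * Nat.factorial (p - 1) := by
        cases p with
        | zero => exact absurd rfl hp.ne_zero
        | succ q => simp [Nat.factorial_succ]
      rw [hfac, pow_two] at h5
      have h6 : p ∣ Nat.factorial (p - 1) := (mul_dvd_mul_iff_left hp.pos.ne').mp h5
      have h7 : p ≤ p - 1 := (Nat.Prime.dvd_factorial hp).mp h6
      have := hp.two_le
      omega
    have hne : n ≠ 0 := by
      rintro rfl
      rw [pow_zero] at hn
      rw [hn] at hdvd1
      exact hp.one_lt.ne' (Nat.dvd_one.mp hdvd1)
    have hn_eq : n = 1 := by omega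
    rw [hn, hn_eq, pow_one]
  rcases hle.lt_or_eq with hlt | heq
  · exfalso
    have h8 := Subgroup.index_strictAnti hlt
    rw [hidx, hn1] at h8
    exact lt_irrefl _ h8
  · exact heq

/-- If a finite permutation `p`-group `A` has a regular abelian subgroup `G` of index `p`
and `G` has a subgroup `M` of index `p` that is normalised but not centralised by a
point-stabiliser in `A`, then `A` has a regular nonabelian subgroup. -/
theorem stmt_3 {X : Type*} [Fintype X] (p : ℕ) (hp : p.Prime)
    (A : Subgroup (Equiv.Perm X)) (hApow : IsPGroup p A)
    (G : Subgroup (Equiv.Perm X)) (hGA : G ≤ A)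
    (hGreg : IsRegularSub G) (hGab : ∀ a ∈ G, ∀ b ∈ G, a * b = b * a)
    (hGidx : (G.subgroupOf A).index = p)
    (M : Subgroup (Equiv.Perm X)) (hMG : M ≤ G)
    (hMidx : (M.subgroupOf G).index = p)
    (v : X)
    (hnorm : ∀ σ ∈ A ⊓ MulAction.stabilizer (Equiv.Perm X) v,
      ∀ m ∈ M, σ * m * σ⁻¹ ∈ M)
    (hncent : ¬ ∀ σ ∈ A ⊓ MulAction.stabilizer (Equiv.Perm X) v,
      ∀ m ∈ M, σ * m = m * σ) :
    ∃ H : Subgroup (Equiv.Perm X), H ≤ A ∧ IsRegularSub H ∧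
      ¬ ∀ a ∈ H, ∀ b ∈ H, a * b = b * a := by
  classical
  haveI : Fact p.Prime := ⟨hp⟩
  haveI : Finite (Equiv.Perm X) := Finite.of_fintype _
  push_neg at hncent
  obtain ⟨σ, hσAv, m₀, hm₀M, hσm₀⟩ := hncent
  obtain ⟨hσA, hσst⟩ := Subgroup.mem_inf.mp hσAv
  have hσv : σ v = v := hσst
  -- trivial G-stabilizer
  have hGtriv : ∀ x ∈ G, x v = v → x = 1 := by
    intro x hx hxv
    obtain ⟨y, hy, hyu⟩ := hGreg v v
    have h1 := hyu ⟨x, hx⟩ hxv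
    have h2 := hyu 1 (by simp)
    rw [← h2] at h1
    exact Subtype.ext_iff.mp h1
  -- the orbit map of G is bijective
  have hGbij : Function.Bijective (fun x : ↥G => (x : Equiv.Perm X) v) := by
    constructor
    · intro a b hab
      obtain ⟨y, hy, hyu⟩ := hGreg v ((a : Equiv.Perm X) v)
      exact (hyu a rfl).trans (hyu b (by exact hab.symm)).symm
    · intro w
      obtain ⟨y, hy, -⟩ := hGreg v w
      exact ⟨y, hy⟩
  have hcardGX : Nat.card ↥G = Nat.card X := Nat.card_congr (Equiv.ofBijective _ hGbij)
  -- the point stabiliser in A has order p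
  have hAv : ∀ s : Equiv.Perm X, s ∈ A ⊓ MulAction.stabilizer (Equiv.Perm X) v → s v = v :=
    fun s hs => (Subgroup.mem_inf.mp hs).2
  have hmapA : ∀ gs : ↥G × ↥(A ⊓ MulAction.stabilizer (Equiv.Perm X) v),
      (gs.1 : Equiv.Perm X) * gs.2 ∈ A :=
    fun gs => A.mul_mem (hGA gs.1.2) (Subgroup.mem_inf.mp gs.2.2).1
  have hprodbij : Function.Bijective
      (fun gs : ↥G × ↥(A ⊓ MulAction.stabilizer (Equiv.Perm X) v) =>
        (⟨(gs.1 : Equiv.Perm X) * gs.2, hmapA gs⟩ : ↥A)) := by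
    constructor
    · rintro ⟨g₁, s₁⟩ ⟨g₂, s₂⟩ hmul
      have h12 : (g₁ : Equiv.Perm X) * s₁ = (g₂ : Equiv.Perm X) * s₂ := Subtype.ext_iff.mp hmul
      have ht : (g₂ : Equiv.Perm X)⁻¹ * g₁ = (s₂ : Equiv.Perm X) * (s₁ : Equiv.Perm X)⁻¹ := by
        calc (g₂ : Equiv.Perm X)⁻¹ * g₁
            = (g₂ : Equiv.Perm X)⁻¹ * (((g₁ : Equiv.Perm X) * s₁) * (s₁ : Equiv.Perm X)⁻¹) := by
              group
          _ = (g₂ : Equiv.Perm X)⁻¹ * (((g₂ : Equiv.Perm X) * s₂) * (s₁ : Equiv.Perm X)⁻¹) := by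
              rw [h12]
          _ = (s₂ : Equiv.Perm X) * (s₁ : Equiv.Perm X)⁻¹ := by group
      have htG : (g₂ : Equiv.Perm X)⁻¹ * g₁ ∈ G := G.mul_mem (G.inv_mem g₂.2) g₁.2
      have hs₁v : (s₁ : Equiv.Perm X) v = v := hAv _ s₁.2
      have hs₂v : (s₂ : Equiv.Perm X) v = v := hAv _ s₂.2
      have hs₁v' : ((s₁ : Equiv.Perm X))⁻¹ v = v := by
        calc ((s₁ : Equiv.Perm X))⁻¹ v = ((s₁ : Equiv.Perm X))⁻¹ ((s₁ : Equiv.Perm X) v) := by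
              rw [hs₁v]
          _ = v := Equiv.symm_apply_apply _ _
      have htv : ((g₂ : Equiv.Perm X)⁻¹ * g₁) v = v := by
        rw [ht, Equiv.Perm.mul_apply, hs₁v', hs₂v]
      have h1 := hGtriv _ htG htv
      have hg12 : g₁ = g₂ := by
        apply Subtype.ext
        have := inv_mul_eq_one.mp h1
        exact this.symm
      have hs12 : s₁ = s₂ := by
        apply Subtype.ext
        apply mul_left_cancel (a := (g₁ : Equiv.Perm X))
        rw [h12, hg12]
      exact Prod.ext hg12 hs12
    · rintro ⟨a, ha⟩
      obtain ⟨y, hy, -⟩ := hGreg v (a v)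
      have hsA : (y : Equiv.Perm X)⁻¹ * a ∈ A := A.mul_mem (A.inv_mem (hGA y.2)) ha
      have hsst : (y : Equiv.Perm X)⁻¹ * a ∈ MulAction.stabilizer (Equiv.Perm X) v := by
        show ((y : Equiv.Perm X)⁻¹ * a) • v = v
        show ((y : Equiv.Perm X)⁻¹ * a) v = v
        rw [Equiv.Perm.mul_apply, ← hy, (by exact Equiv.symm_apply_apply _ _ :
          (y : Equiv.Perm X)⁻¹ ((y : Equiv.Perm X) v) = v)]
      refine ⟨⟨y, ⟨(y : Equiv.Perm X)⁻¹ * a, Subgroup.mem_inf.mpr ⟨hsA, hsst⟩⟩⟩, ?_⟩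
      apply Subtype.ext
      show (y : Equiv.Perm X) * ((y : Equiv.Perm X)⁻¹ * a) = a
      group
  have hcardA : Nat.card ↥A =
      Nat.card ↥G * Nat.card ↥(A ⊓ MulAction.stabilizer (Equiv.Perm X) v) := by
    rw [← Nat.card_prod]
    exact (Nat.card_congr (Equiv.ofBijective _ hprodbij)).symm
  have hcardA' : Nat.card ↥A = p * Nat.card ↥G := by
    have h1 := Subgroup.index_mul_card (G.subgroupOf A)
    rw [hGidx] at h1
    rw [← h1]
    congr 1
    exact Nat.card_congr (Subgroup.subgroupOfEquivOfLe hGA).toEquiv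
  have hGpos : 0 < Nat.card ↥G := Nat.card_pos
  have hcardAv : Nat.card ↥(A ⊓ MulAction.stabilizer (Equiv.Perm X) v) = p := by
    have h2 : Nat.card ↥G * Nat.card ↥(A ⊓ MulAction.stabilizer (Equiv.Perm X) v) =
        Nat.card ↥G * p := by rw [← hcardA, hcardA', mul_comm]
    exact Nat.eq_of_mul_eq_mul_left hGpos h2
  -- σ has order p
  have hσp : σ ^ p = 1 := by
    have h1 : (⟨σ, hσAv⟩ : ↥(A ⊓ MulAction.stabilizer (Equiv.Perm X) v)) ^ p = 1 := by
      rw [← hcardAv]; exact pow_card_eq_one'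
    have h2 := Subtype.ext_iff.mp h1
    simpa using h2
  have hσ1 : σ ≠ 1 := by
    rintro rfl
    simp at hσm₀
  have hordσ : orderOf σ = p := orderOf_eq_prime hσp hσ1
  -- G is normal in A
  have hGnormal : ∀ a ∈ A, ∀ x ∈ G, a * x * a⁻¹ ∈ G := by
    have hnorm' : (G.subgroupOf A).Normal := aux_normal hp hApow (G.subgroupOf A) hGidx
    intro a ha x hx
    have h1 := hnorm'.conj_mem ⟨x, hGA hx⟩ (by rwa [Subgroup.mem_subgroupOf]) ⟨a, ha⟩
    rw [Subgroup.mem_subgroupOf] at h1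
    simpa using h1
  -- key: conjugation by σ acts trivially on G / M
  have key5 : ∀ x ∈ G, x⁻¹ * (σ * x * σ⁻¹) ∈ M := by
    have hf1 : ∀ x : ↥G, σ * (x : Equiv.Perm X) * σ⁻¹ ∈ G := fun x => hGnormal σ hσA x x.2
    let f : ↥G →* ↥G :=
      { toFun := fun x => ⟨σ * (x : Equiv.Perm X) * σ⁻¹, hf1 x⟩
        map_one' := by apply Subtype.ext; simp
        map_mul' := by
          intro a b
          apply Subtype.ext
          show σ * ((a * b : ↥G) : Equiv.Perm X) * σ⁻¹ = _
          push_cast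
          group }
    haveI hNnormal : (M.subgroupOf G).Normal := by
      constructor
      intro n hn x
      rw [Subgroup.mem_subgroupOf] at hn ⊢
      have hc : ((x * n * x⁻¹ : ↥G) : Equiv.Perm X) = (n : Equiv.Perm X) := by
        push_cast
        have h1 := hGab (x : Equiv.Perm X) x.2 (n : Equiv.Perm X) n.2
        rw [h1, mul_assoc]
        simp
      rw [hc]
      exact hn
    have hfN : ∀ x ∈ M.subgroupOf G, f x ∈ M.subgroupOf G := by
      intro x hx
      rw [Subgroup.mem_subgroupOf] at hx ⊢
      exact hnorm σ hσAv _ hx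
    have hfp : ∀ x : ↥G, f^[p] x = x := by
      have hgen : ∀ (n : ℕ) (x : ↥G),
          ((f^[n] x : ↥G) : Equiv.Perm X) = σ ^ n * (x : Equiv.Perm X) * (σ ^ n)⁻¹ := by
        intro n
        induction n with
        | zero => intro x; simp
        | succ n ih =>
          intro x
          rw [Function.iterate_succ_apply']
          show σ * ((f^[n] x : ↥G) : Equiv.Perm X) * σ⁻¹ = _
          rw [ih, pow_succ]
          group
      intro x
      apply Subtype.ext
      rw [hgen p x, hσp]
      simp
    have hres := aux_fixed hp (M.subgroupOf G) hMidx f hfN hfp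
    intro x hx
    have h2 := hres ⟨x, hx⟩
    rw [Subgroup.mem_subgroupOf] at h2
    have h3 : (((⟨x, hx⟩ : ↥G))⁻¹ * f ⟨x, hx⟩ : ↥G) = (⟨x, hx⟩ : ↥G)⁻¹ * ⟨σ * x * σ⁻¹, hf1 ⟨x, hx⟩⟩ := rfl
    rw [h3] at h2
    simpa using h2
  have key5inv : ∀ x ∈ G, x⁻¹ * (σ⁻¹ * x * σ) ∈ M := by
    intro x hx
    have hyG : σ⁻¹ * x * σ ∈ G := by
      have h1 := hGnormal σ⁻¹ (A.inv_mem hσA) x hx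
      simpa using h1
    have h2 := key5 _ hyG
    have h3 : σ * (σ⁻¹ * x * σ) * σ⁻¹ = x := by group
    rw [h3] at h2
    have h4 := M.inv_mem h2
    simpa [mul_assoc] using h4
  -- choose g generating G modulo M
  have hNindex : (M.subgroupOf G).index = p := hMidx
  have hNne : (M.subgroupOf G) ≠ ⊤ := by
    intro h0
    rw [h0, Subgroup.index_top] at hNindex
    exact hp.one_lt.ne' hNindex.symm
  obtain ⟨g₀, hg₀⟩ : ∃ x : ↥G, x ∉ M.subgroupOf G := by
    by_contra h0
    push_neg at h0
    exact hNne ((Subgroup.eq_top_iff' _).mpr h0)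
  haveI hNnormal : (M.subgroupOf G).Normal := by
    constructor
    intro n hn x
    rw [Subgroup.mem_subgroupOf] at hn ⊢
    have hc : ((x * n * x⁻¹ : ↥G) : Equiv.Perm X) = (n : Equiv.Perm X) := by
      push_cast
      have h1 := hGab (x : Equiv.Perm X) x.2 (n : Equiv.Perm X) n.2
      rw [h1, mul_assoc]
      simp
    rw [hc]
    exact hn
  obtain ⟨hdecomp, hpow_dvd, hgp⟩ := aux_gen hp (M.subgroupOf G) hNindex hg₀
  set g : Equiv.Perm X := (g₀ : Equiv.Perm X) with hgdef
  have hgG : g ∈ G := g₀.2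
  have hcoe_pow : ∀ k : ℕ, ((g₀ ^ k : ↥G) : Equiv.Perm X) = g ^ k := fun k => by push_cast; rfl
  have hdecomp' : ∀ x ∈ G, ∃ k : ℕ, ∃ m ∈ M, x = g ^ k * m := by
    intro x hx
    obtain ⟨k, hk⟩ := hdecomp ⟨x, hx⟩
    rw [Subgroup.mem_subgroupOf] at hk
    have hk2 : (g ^ k)⁻¹ * x ∈ M := by
      have hc : (((g₀ ^ k)⁻¹ * ⟨x, hx⟩ : ↥G) : Equiv.Perm X) = (g ^ k)⁻¹ * x := by
        push_cast; rfl
      rwa [hc] at hk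
    exact ⟨k, (g ^ k)⁻¹ * x, hk2, by group⟩
  have hgkM : ∀ k : ℕ, g ^ k ∈ M → p ∣ k := by
    intro k hk
    apply hpow_dvd k
    rw [Subgroup.mem_subgroupOf, hcoe_pow]
    exact hk
  have hgpM : g ^ p ∈ M := by
    rw [Subgroup.mem_subgroupOf, hcoe_pow] at hgp
    exact hgp
  -- the twisted generator h
  set h : Equiv.Perm X := σ * g with hhdef
  have hhA : h ∈ A := A.mul_mem hσA (hGA hgG)
  -- single step conjugation
  have hσinvM : ∀ m ∈ M, σ⁻¹ * m * σ ∈ M := by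
    intro m hm
    have h1 := hnorm σ⁻¹ ((A ⊓ MulAction.stabilizer (Equiv.Perm X) v).inv_mem hσAv) m hm
    simpa using h1
  have hstep1 : ∀ m ∈ M, h⁻¹ * m * h ∈ M := by
    intro m hm
    have h1 : σ⁻¹ * m * σ ∈ M := hσinvM m hm
    have h2 : g⁻¹ * (σ⁻¹ * m * σ) * g = σ⁻¹ * m * σ := by
      have hc := hGab g hgG (σ⁻¹ * m * σ) (hMG h1)
      calc g⁻¹ * (σ⁻¹ * m * σ) * g = g⁻¹ * ((σ⁻¹ * m * σ) * g) := by group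
        _ = g⁻¹ * (g * (σ⁻¹ * m * σ)) := by rw [← hc]
        _ = σ⁻¹ * m * σ := by group
    have h3 : h⁻¹ * m * h = g⁻¹ * (σ⁻¹ * m * σ) * g := by rw [hhdef]; group
    rw [h3, h2]
    exact h1
  have hstep2 : ∀ m ∈ M, h * m * h⁻¹ ∈ M := by
    intro m hm
    have h2 : g * m * g⁻¹ = m := by
      have hc := hGab g hgG m (hMG hm)
      rw [hc, mul_assoc]
      simp
    have h3 : h * m * h⁻¹ = σ * (g * m * g⁻¹) * σ⁻¹ := by rw [hhdef]; group
    rw [h3, h2]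
    exact hnorm σ hσAv m hm
  have hconjk : ∀ k : ℕ,
      (∀ m ∈ M, (h ^ k)⁻¹ * m * h ^ k ∈ M) ∧ (∀ m ∈ M, h ^ k * m * (h ^ k)⁻¹ ∈ M) := by
    intro k
    induction k with
    | zero => simp
    | succ k ih =>
      constructor
      · intro m hm
        have e : (h ^ (k + 1))⁻¹ * m * h ^ (k + 1) = h⁻¹ * ((h ^ k)⁻¹ * m * h ^ k) * h := by
          rw [pow_succ]; group
        rw [e]
        exact hstep1 _ (ih.1 m hm)
      · intro m hm
        have e : h ^ (k + 1) * m * (h ^ (k + 1))⁻¹ = h * (h ^ k * m * (h ^ k)⁻¹) * h⁻¹ := by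
          rw [pow_succ']; group
        rw [e]
        exact hstep2 _ (ih.2 m hm)
  -- h ^ k = σ ^ k * g ^ k * (element of M)
  have hkNat : ∀ k : ℕ, ∃ m ∈ M, h ^ k = σ ^ k * g ^ k * m := by
    intro k
    induction k with
    | zero => exact ⟨1, M.one_mem, by simp⟩
    | succ k ih =>
      obtain ⟨m, hm, hk⟩ := ih
      have hm₁ : σ⁻¹ * m * σ ∈ M := hσinvM m hm
      have hm₂ : (g ^ k)⁻¹ * (σ⁻¹ * g ^ k * σ) ∈ M := key5inv (g ^ k) (G.pow_mem hgG k)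
      have hm' : ((g ^ k)⁻¹ * (σ⁻¹ * g ^ k * σ)) * (σ⁻¹ * m * σ) ∈ M := M.mul_mem hm₂ hm₁
      have hcomm : g⁻¹ * (((g ^ k)⁻¹ * (σ⁻¹ * g ^ k * σ)) * (σ⁻¹ * m * σ)) * g =
          ((g ^ k)⁻¹ * (σ⁻¹ * g ^ k * σ)) * (σ⁻¹ * m * σ) := by
        have hc := hGab g hgG _ (hMG hm')
        calc g⁻¹ * (((g ^ k)⁻¹ * (σ⁻¹ * g ^ k * σ)) * (σ⁻¹ * m * σ)) * g
            = g⁻¹ * ((((g ^ k)⁻¹ * (σ⁻¹ * g ^ k * σ)) * (σ⁻¹ * m * σ)) * g) := by group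
          _ = g⁻¹ * (g * (((g ^ k)⁻¹ * (σ⁻¹ * g ^ k * σ)) * (σ⁻¹ * m * σ))) := by rw [← hc]
          _ = ((g ^ k)⁻¹ * (σ⁻¹ * g ^ k * σ)) * (σ⁻¹ * m * σ) := by group
      refine ⟨_, hm', ?_⟩
      rw [pow_succ (h), hk, hhdef]
      calc σ ^ k * g ^ k * m * (σ * g)
          = σ ^ (k + 1) * g ^ (k + 1) *
            (g⁻¹ * (((g ^ k)⁻¹ * (σ⁻¹ * g ^ k * σ)) * (σ⁻¹ * m * σ)) * g) := by
            rw [pow_succ σ, pow_succ g]; group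
        _ = σ ^ (k + 1) * g ^ (k + 1) * (((g ^ k)⁻¹ * (σ⁻¹ * g ^ k * σ)) * (σ⁻¹ * m * σ)) := by
            rw [hcomm]
  have hhp : h ^ p ∈ M := by
    obtain ⟨m, hm, hk⟩ := hkNat p
    rw [hσp, one_mul] at hk
    rw [hk]
    exact M.mul_mem hgpM hm
  -- h ^ n ∈ M implies p ∣ n
  have hσpow_v : ∀ n : ℕ, (σ ^ n) v = v := by
    intro n
    induction n with
    | zero => rfl
    | succ n ih => rw [pow_succ, Equiv.Perm.mul_apply, hσv, ih]
  have hhnM : ∀ n : ℕ, h ^ n ∈ M → p ∣ n := by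
    intro n hn
    obtain ⟨mn, hmn, he⟩ := hkNat n
    have hσnG : σ ^ n ∈ G := by
      have he2 : σ ^ n = h ^ n * mn⁻¹ * (g ^ n)⁻¹ := by rw [he]; group
      rw [he2]
      exact G.mul_mem (G.mul_mem (hMG hn) (G.inv_mem (hMG hmn))) (G.inv_mem (G.pow_mem hgG n))
    have h1 := hGtriv _ hσnG (hσpow_v n)
    have h2 := orderOf_dvd_of_pow_eq_one h1
    rwa [hordσ] at h2
  -- the subgroup H
  have hexp : ∀ k : ℕ, h ^ (k * (p - 1)) * h ^ k = h ^ (p * k) := by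
    intro k
    rw [← pow_add]
    congr 1
    have h1 : p - 1 + 1 = p := Nat.succ_pred_eq_of_pos hp.pos
    calc k * (p - 1) + k = k * ((p - 1) + 1) := by ring
      _ = p * k := by rw [h1]; ring
  let Hc : Subgroup (Equiv.Perm X) :=
    { carrier := {x | ∃ k : ℕ, ∃ m ∈ M, x = h ^ k * m}
      one_mem' := ⟨0, 1, M.one_mem, by simp⟩
      mul_mem' := by
        rintro a b ⟨k, m, hm, rfl⟩ ⟨j, m', hm', rfl⟩
        refine ⟨k + j, ((h ^ j)⁻¹ * m * h ^ j) * m', M.mul_mem ((hconjk j).1 m hm) hm', ?_⟩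
        rw [pow_add]
        group
      inv_mem' := by
        rintro a ⟨k, m, hm, rfl⟩
        refine ⟨k * (p - 1),
          (h ^ (k * (p - 1)))⁻¹ * (m⁻¹ * ((h ^ p) ^ k)⁻¹) * h ^ (k * (p - 1)),
          (hconjk _).1 _ (M.mul_mem (M.inv_mem hm) (M.inv_mem (M.pow_mem hhp k))), ?_⟩
        rw [mul_inv_rev, ← pow_mul]
        rw [← hexp k, mul_inv_rev]
        group }
  have hmemHc : ∀ x : Equiv.Perm X, x ∈ Hc ↔ ∃ k : ℕ, ∃ m ∈ M, x = h ^ k * m := fun x => Iff.rfl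
  have hMHc : ∀ m ∈ M, m ∈ Hc := fun m hm => ⟨0, m, hm, by simp⟩
  have hhHc : h ∈ Hc := ⟨1, 1, M.one_mem, by simp⟩
  refine ⟨Hc, ?_, ?_, ?_⟩
  · rintro x ⟨k, m, hm, rfl⟩
    exact A.mul_mem (A.pow_mem hhA k) (hGA (hMG hm))
  · -- regularity
    have hHstab : ∀ x ∈ Hc, x v = v → x = 1 := by
      rintro x ⟨k, m, hm, rfl⟩ hxv
      obtain ⟨mk, hmk, hke⟩ := hkNat k
      have hyG : g ^ k * mk * m ∈ G :=
        G.mul_mem (G.mul_mem (G.pow_mem hgG k) (hMG hmk)) (hMG hm)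
      have hx2 : h ^ k * m = σ ^ k * (g ^ k * mk * m) := by rw [hke]; group
      have hyv : (g ^ k * mk * m) v = v := by
        apply Equiv.injective (σ ^ k)
        rw [← Equiv.Perm.mul_apply, ← hx2, hσpow_v, hxv]
      have h1 := hGtriv _ hyG hyv
      have hgkM' : g ^ k ∈ M := by
        have h2 : g ^ k = m⁻¹ * mk⁻¹ := by
          rw [← one_mul (m⁻¹ * mk⁻¹), ← h1]
          group
        rw [h2]
        exact M.mul_mem (M.inv_mem hm) (M.inv_mem hmk)
      obtain ⟨t, rfl⟩ := hgkM k hgkM'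
      have hσk1 : σ ^ (p * t) = 1 := by rw [pow_mul, hσp, one_pow]
      rw [hx2, hσk1, one_mul, h1]
    have horb_inj : ∀ x ∈ Hc, ∀ y ∈ Hc, x v = y v → x = y := by
      intro x hx y hy hxy
      have hmem : y⁻¹ * x ∈ Hc := Hc.mul_mem (Hc.inv_mem hy) hx
      have hv1 : (y⁻¹ * x) v = v := by
        rw [Equiv.Perm.mul_apply, hxy]
        exact Equiv.symm_apply_apply _ _
      have h1 := hHstab _ hmem hv1
      exact (inv_mul_eq_one.mp h1).symm
    -- cardinality of Hc
    have hinjPM : Function.Injective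
        (fun km : Fin p × ↥M =>
          (⟨h ^ (km.1 : ℕ) * km.2, ⟨km.1, km.2, km.2.2, rfl⟩⟩ : ↥Hc)) := by
      have main : ∀ (a b : ℕ) (ma mb : Equiv.Perm X), ma ∈ M → mb ∈ M → a ≤ b →
          h ^ a * ma = h ^ b * mb → p ∣ b - a := by
        intro a b ma mb hma hmb hab heq2
        have hba : h ^ (b - a) * h ^ a = h ^ b := by
          rw [← pow_add, Nat.sub_add_cancel hab]
        have hb2 : h ^ (b - a) = h ^ a * (ma * mb⁻¹) * (h ^ a)⁻¹ := by
          calc h ^ (b - a) = (h ^ (b - a) * h ^ a) * mb * mb⁻¹ * (h ^ a)⁻¹ := by group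
            _ = (h ^ b * mb) * mb⁻¹ * (h ^ a)⁻¹ := by rw [hba]
            _ = (h ^ a * ma) * mb⁻¹ * (h ^ a)⁻¹ := by rw [← heq2]
            _ = h ^ a * (ma * mb⁻¹) * (h ^ a)⁻¹ := by group
        have h3 : h ^ (b - a) ∈ M := by
          rw [hb2]
          exact (hconjk a).2 _ (M.mul_mem hma (M.inv_mem hmb))
        exact hhnM _ h3
      rintro ⟨k, m⟩ ⟨j, m'⟩ heq
      have heq' : h ^ (k : ℕ) * (m : Equiv.Perm X) = h ^ (j : ℕ) * (m' : Equiv.Perm X) :=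
        Subtype.ext_iff.mp heq
      have hkj : (k : ℕ) = (j : ℕ) := by
        rcases le_total (k : ℕ) (j : ℕ) with hle | hle
        · have hd := main k j m m' m.2 m'.2 hle heq'
          have hlt : (j : ℕ) - (k : ℕ) < p := by
            have := j.isLt
            omega
          have h0 := Nat.eq_zero_of_dvd_of_lt hd hlt
          omega
        · have hd := main j k m' m m'.2 m.2 hle heq'.symm
          have hlt : (k : ℕ) - (j : ℕ) < p := by
            have := k.isLt
            omega
          have h0 := Nat.eq_zero_of_dvd_of_lt hd hlt
          omega
      have hm2 : (m : Equiv.Perm X) = m' := by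
        rw [hkj] at heq'
        exact mul_left_cancel heq'
      exact Prod.ext (Fin.ext hkj) (Subtype.ext hm2)
    have hcard_ge : p * Nat.card ↥M ≤ Nat.card ↥Hc := by
      have h1 := Nat.card_le_card_of_injective _ hinjPM
      rwa [Nat.card_prod, Nat.card_eq_fintype_card, Fintype.card_fin] at h1
    have hcard_le : Nat.card ↥Hc ≤ Nat.card X :=
      Nat.card_le_card_of_injective (fun x : ↥Hc => (x : Equiv.Perm X) v)
        (fun a b hab => Subtype.ext (horb_inj a a.2 b b.2 hab))
    have hcardGM : Nat.card ↥G = p * Nat.card ↥M := by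
      have h1 := Subgroup.index_mul_card (M.subgroupOf G)
      rw [hMidx] at h1
      rw [← h1]
      congr 1
      exact Nat.card_congr (Subgroup.subgroupOfEquivOfLe hMG).toEquiv
    have hcardH : Nat.card ↥Hc = Nat.card X := by omega
    have horb_bij : Function.Bijective (fun x : ↥Hc => (x : Equiv.Perm X) v) := by
      rw [Nat.bijective_iff_injective_and_card]
      exact ⟨fun a b hab => Subtype.ext (horb_inj a a.2 b b.2 hab), hcardH⟩
    intro v' w
    obtain ⟨a, ha'⟩ := horb_bij.2 v'
    obtain ⟨b, hb'⟩ := horb_bij.2 w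
    have ha : (a : Equiv.Perm X) v = v' := ha'
    have hb : (b : Equiv.Perm X) v = w := hb'
    refine ⟨⟨(b : Equiv.Perm X) * (a : Equiv.Perm X)⁻¹,
      Hc.mul_mem b.2 (Hc.inv_mem a.2)⟩, ?_, ?_⟩
    · show ((b : Equiv.Perm X) * (a : Equiv.Perm X)⁻¹) v' = w
      rw [← ha, Equiv.Perm.mul_apply, (by exact Equiv.symm_apply_apply _ _ :
        (a : Equiv.Perm X)⁻¹ ((a : Equiv.Perm X) v) = v), hb]
    · rintro ⟨x, hx⟩ hxv
      apply Subtype.ext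
      show x = (b : Equiv.Perm X) * (a : Equiv.Perm X)⁻¹
      have h1 : (x * (a : Equiv.Perm X)) v = w := by
        rw [Equiv.Perm.mul_apply, ha]
        exact hxv
      have h2 := horb_inj (x * (a : Equiv.Perm X)) (Hc.mul_mem hx a.2) b b.2 (h1.trans hb.symm)
      rw [← h2]
      group
  · -- nonabelian
    intro habs
    apply hσm₀
    have hcm := habs h hhHc m₀ (hMHc m₀ hm₀M)
    have hgm : g * m₀ = m₀ * g := hGab g hgG m₀ (hMG hm₀M)
    have h1 : σ * m₀ * g = m₀ * σ * g := by
      calc σ * m₀ * g = σ * (m₀ * g) := by group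
        _ = σ * (g * m₀) := by rw [hgm]
        _ = (σ * g) * m₀ := by group
        _ = m₀ * (σ * g) := by rw [← hhdef, hcm]
        _ = m₀ * σ * g := by group
    exact mul_right_cancel h1
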